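/- Let η₁, η₂ ∈ ℝ and ξ₁, ξ₂, ϑ, υ, L > 0. Then for every pair (ℓ₁, ℓ₂) of nonnegative integers with ξ₁ℓ₁ + ξ₂ℓ₂ ≤ L, one has η₁ℓ₁ + η₂ℓ₂ − ϑ·max(ℓ₁ − υℓ₂, 0) ≤ L · max(0, (η₁ − ϑ)/ξ₁, η₂/ξ₂, (η₂ + υη₁)/(ξ₂ + υξ₁)). -/

import Mathlib

/-- For `η₁, η₂ ∈ ℝ` and `ξ₁, ξ₂, ϑ, υ, L > 0`, every pair `(ℓ₁, ℓ₂)` of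
nonnegative integers with `ξ₁ℓ₁ + ξ₂ℓ₂ ≤ L` satisfies
`η₁ℓ₁ + η₂ℓ₂ − ϑ·max(ℓ₁ − υℓ₂, 0) ≤ L·max(0, (η₁−ϑ)/ξ₁, η₂/ξ₂, (η₂+υη₁)/(ξ₂+υξ₁))`. -/
theorem linear_max_bound (η₁ η₂ ξ₁ ξ₂ ϑ υ L : ℝ)
    (hξ₁ : 0 < ξ₁) (hξ₂ : 0 < ξ₂) (hϑ : 0 < ϑ) (hυ : 0 < υ) (hL : 0 < L) :
    ∀ ℓ₁ ℓ₂ : ℕ, ξ₁ * ℓ₁ + ξ₂ * ℓ₂ ≤ L →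
      η₁ * ℓ₁ + η₂ * ℓ₂ - ϑ * max ((ℓ₁ : ℝ) - υ * ℓ₂) 0
        ≤ L * max 0 (max ((η₁ - ϑ) / ξ₁) (max (η₂ / ξ₂) ((η₂ + υ * η₁) / (ξ₂ + υ * ξ₁)))) := by
  intro ℓ₁ ℓ₂ hc
  set M := max 0 (max ((η₁ - ϑ) / ξ₁) (max (η₂ / ξ₂) ((η₂ + υ * η₁) / (ξ₂ + υ * ξ₁)))) with hM
  have hM0 : 0 ≤ M := le_max_left _ _
  have h1 : η₁ - ϑ ≤ M * ξ₁ := by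
    have hh : (η₁ - ϑ) / ξ₁ ≤ M := le_max_of_le_right (le_max_left _ _)
    calc η₁ - ϑ = ((η₁ - ϑ) / ξ₁) * ξ₁ := by field_simp
    _ ≤ M * ξ₁ := by nlinarith
  have h2 : η₂ ≤ M * ξ₂ := by
    have hh : η₂ / ξ₂ ≤ M := le_max_of_le_right (le_max_of_le_right (le_max_left _ _))
    calc η₂ = (η₂ / ξ₂) * ξ₂ := by field_simp
    _ ≤ M * ξ₂ := by nlinarith
  have hs : 0 < ξ₂ + υ * ξ₁ := by positivity
  have h3 : η₂ + υ * η₁ ≤ M * (ξ₂ + υ * ξ₁) := by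
    have hh : (η₂ + υ * η₁) / (ξ₂ + υ * ξ₁) ≤ M :=
      le_max_of_le_right (le_max_of_le_right (le_max_right _ _))
    calc η₂ + υ * η₁ = ((η₂ + υ * η₁) / (ξ₂ + υ * ξ₁)) * (ξ₂ + υ * ξ₁) := by field_simp
    _ ≤ M * (ξ₂ + υ * ξ₁) := by nlinarith
  have hx : (0:ℝ) ≤ (ℓ₁:ℝ) := Nat.cast_nonneg _
  have hy : (0:ℝ) ≤ (ℓ₂:ℝ) := Nat.cast_nonneg _
  rcases le_or_gt ((ℓ₁:ℝ) - υ * ℓ₂) 0 with h | h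
  · rw [max_eq_right h]
    -- x ≤ υ y case: η₁x + η₂y = ((υη₁+η₂)/υ)x + η₂(y - x/υ)
    have key : υ * (η₁ * ℓ₁ + η₂ * ℓ₂)
        = (η₂ + υ * η₁) * ℓ₁ + η₂ * (υ * ℓ₂ - ℓ₁) := by ring
    have hyx : 0 ≤ υ * (ℓ₂:ℝ) - ℓ₁ := by linarith
    have b1 : (η₂ + υ * η₁) * ℓ₁ ≤ M * (ξ₂ + υ * ξ₁) * ℓ₁ := by nlinarith
    have b2 : η₂ * (υ * ℓ₂ - ℓ₁) ≤ M * ξ₂ * (υ * ℓ₂ - ℓ₁) := by nlinarith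
    have : υ * (η₁ * ℓ₁ + η₂ * ℓ₂) ≤ υ * (M * (ξ₁ * ℓ₁ + ξ₂ * ℓ₂)) := by
      rw [key]; nlinarith
    have h4 : η₁ * ℓ₁ + η₂ * ℓ₂ ≤ M * (ξ₁ * ℓ₁ + ξ₂ * ℓ₂) := by
      have := mul_le_mul_iff_of_pos_left hυ |>.mp this
      linarith
    nlinarith
  · rw [max_eq_left h.le]
    -- x ≥ υ y case: obj = (η₁-ϑ)(x-υy) + (υη₁+η₂)y
    have b1 : (η₁ - ϑ) * ((ℓ₁:ℝ) - υ * ℓ₂) ≤ M * ξ₁ * ((ℓ₁:ℝ) - υ * ℓ₂) := by nlinarith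
    have b2 : (η₂ + υ * η₁) * ℓ₂ ≤ M * (ξ₂ + υ * ξ₁) * ℓ₂ := by nlinarith
    have h4 : η₁ * ℓ₁ + η₂ * ℓ₂ - ϑ * ((ℓ₁:ℝ) - υ * ℓ₂) ≤ M * (ξ₁ * ℓ₁ + ξ₂ * ℓ₂) := by
      nlinarith
    nlinarith
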